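/- arXiv:1904.03840 — 10 statements merged into one kernel-verified Lean document; each statement's English description precedes it below -/
import Mathlib

section
/- Let (V, L) be a pairwise balanced design and M = (V, H) the corresponding rank-3 matroid with H = P_{≤2}(V) ∪ {X ∈ P_3(V) : X is not contained in any block of L}. Then a subset X of V lies in ε(M) = {X ⊆ V : for all independent Y ⊆ X with |Y| ≤ 2 and all p ∈ V \ X, Y ∪ {p} ∈ H} if and only if X is a subsystem of (V, L), i.e., for every pair of distinct points x, y ∈ X the unique block containing x and y is contained in X. -/
theorem stmt3 {V : Type*} [Fintype V] (L : Set (Set V))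
    (hblocks : ∀ B ∈ L, 2 ≤ B.ncard)
    (hpair : ∀ x y : V, x ≠ y → ∃! B, B ∈ L ∧ x ∈ B ∧ y ∈ B) :
    let H : Set (Set V) :=
      {X | X.ncard ≤ 2 ∨ (X.ncard = 3 ∧ ∀ B ∈ L, ¬X ⊆ B)}
    ∀ X : Set V,
      -- X belongs to ε(M)
      (∀ Y ∈ H, Y ⊆ X → Y.ncard ≤ 2 → ∀ p ∉ X, Y ∪ {p} ∈ H) ↔
      -- iff X is a subsystem of (V, L)
      (∀ x ∈ X, ∀ y ∈ X, x ≠ y → ∀ B ∈ L, x ∈ B → y ∈ B → B ⊆ X) := by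
  intro H X
  constructor
  · intro h x hx y hy hxy B hB hxB hyB p hpB
    by_contra hpX
    have hpx : p ≠ x := fun e => hpX (e ▸ hx)
    have hpy : p ≠ y := fun e => hpX (e ▸ hy)
    have hY : ({x, y} : Set V).ncard = 2 := Set.ncard_pair hxy
    have hmem : ({x, y} : Set V) ∈ H := Or.inl (by rw [hY])
    have hsub : ({x, y} : Set V) ⊆ X := by
      intro a ha; rcases ha with rfl | rfl; exact hx; exact hy
    have := h _ hmem hsub (by rw [hY]) p hpX
    rcases this with h1 | ⟨_, h3⟩
    · have : ({x, y} ∪ {p} : Set V).ncard = 3 := by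
        rw [Set.union_singleton, Set.ncard_insert_of_notMem (by simp [hpx, hpy]),
          hY]
      omega
    · exact h3 B hB (by
        rw [Set.union_singleton]
        intro a ha
        rcases ha with rfl | rfl | rfl <;> assumption)
  · intro h Y hYH hYX hY2 p hpX
    rcases Nat.lt_or_ge Y.ncard 2 with h1 | h1
    · left
      calc (Y ∪ {p}).ncard ≤ Y.ncard + ({p} : Set V).ncard :=
            Set.ncard_union_le _ _
        _ ≤ 2 := by rw [Set.ncard_singleton]; omega
    · have hY : Y.ncard = 2 := le_antisymm hY2 h1
      obtain ⟨x, y, hxy, rfl⟩ := Set.ncard_eq_two.mp hY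
      have hx : x ∈ X := hYX (by simp)
      have hy : y ∈ X := hYX (by simp)
      have hpx : p ≠ x := fun e => hpX (e ▸ hx)
      have hpy : p ≠ y := fun e => hpX (e ▸ hy)
      right
      constructor
      · rw [Set.union_singleton, Set.ncard_insert_of_notMem (by simp [hpx, hpy]),
          hY]
      · intro B hB hsub
        have hxB : x ∈ B := hsub (by simp)
        have hyB : y ∈ B := hsub (by simp)
        exact hpX (h x hx y hy hxy B hB hxB hyB (hsub (by simp)))
end

section
/- Let S = (V, H) be a simplicial complex of rank r. The collection ε(S) = {X ⊆ V : for all Y ∈ H with Y ⊆ X and |Y| ≤ r − 1, and all p ∈ V \ X, Y ∪ {p} ∈ H} is closed under intersection, and every flat of S belongs to ε(S). -/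
/-- A flat of a simplicial complex `(V, H)`. -/
def IsFlat {V : Type*} (H : Set (Set V)) (F : Set V) : Prop :=
  ∀ I ∈ H, I ⊆ F → ∀ p ∉ F, I ∪ {p} ∈ H

theorem stmt4 {V : Type*} [Fintype V] [Nonempty V] (H : Set (Set V)) (r : ℕ)
    (hne : H.Nonempty)
    (hdown : ∀ I ∈ H, ∀ J, J ⊆ I → J ∈ H)
    (hrank : (∃ I ∈ H, I.ncard = r) ∧ ∀ I ∈ H, I.ncard ≤ r) :
    let eps : Set (Set V) :=
      {X | ∀ Y ∈ H, Y ⊆ X → Y.ncard ≤ r - 1 → ∀ p ∉ X, Y ∪ {p} ∈ H}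
    (∀ A ∈ eps, ∀ B ∈ eps, A ∩ B ∈ eps) ∧ (∀ F : Set V, IsFlat H F → F ∈ eps) := by
  intro eps
  constructor
  · intro A hA B hB Y hY hYsub hYc p hp
    rcases not_and_or.mp hp with hpA | hpB
    · exact hA Y hY (fun x hx => (hYsub hx).1) hYc p hpA
    · exact hB Y hY (fun x hx => (hYsub hx).2) hYc p hpB
  · intro F hF Y hY hYsub _ p hp
    exact hF Y hY hYsub p hp
end

section
/- Let X = (S, L) and Y = (T, L') be pairwise balanced designs. A partial function f : S → T is a Wilson morphism (i.e., f^{-w}(F) is a subsystem of X for every subsystem F of Y, where f^{-w}(B) is the union of the preimage of B with the set of points where f is undefined) if and only if the domain of f is an open subset of X and f^{-1}(O) is open in X for every open subset O of Y. -/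
/-- A subsystem of a pairwise balanced design `(S, L)`. -/
def Subsys {S : Type*} (L : Set (Set S)) (X : Set S) : Prop :=
  ∀ x ∈ X, ∀ y ∈ X, x ≠ y → ∀ B ∈ L, x ∈ B → y ∈ B → B ⊆ X

/-- An open set of a PBD: the complement of a subsystem. -/
def IsOpenSet {S : Type*} (L : Set (Set S)) (O : Set S) : Prop :=
  Subsys L Oᶜ

/-- The domain of a partial function. -/
def pDom {S T : Type*} (f : S → Option T) : Set S := {x | f x ≠ none}

/-- The image of a partial function. -/
def pIm {S T : Type*} (f : S → Option T) : Set T := {y | ∃ x, f x = some y}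

/-- The (ordinary) inverse image of a set under a partial function. -/
def pPre {S T : Type*} (f : S → Option T) (O : Set T) : Set S :=
  {x | ∃ y ∈ O, f x = some y}

/-- Wilson inverse image: ordinary inverse image together with the co-domain. -/
def pWinv {S T : Type*} (f : S → Option T) (B : Set T) : Set S :=
  {x | ∀ y, f x = some y → y ∈ B}

/-- Composition of partial functions: first `f`, then `g`. -/
def pComp {S T U : Type*} (g : T → Option U) (f : S → Option T) : S → Option U :=
  fun x => (f x).bind g

/-- Image of a set under a partial function. -/
def imOn {S T : Type*} (f : S → Option T) (B : Set S) : Set T :=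
  {y | ∃ x ∈ B, f x = some y}

/-- A Wilson morphism between PBDs: a continuous partial function, i.e. one with
open domain such that inverse images of open sets are open. -/
def Morphism {S T : Type*} (LS : Set (Set S)) (LT : Set (Set T))
    (f : S → Option T) : Prop :=
  IsOpenSet LS (pDom f) ∧ ∀ O : Set T, IsOpenSet LT O → IsOpenSet LS (pPre f O)

lemma pWinv_compl {S T : Type*} (f : S → Option T) (O : Set T) :
    pWinv f Oᶜ = (pPre f O)ᶜ := by
  ext x
  simp only [pWinv, pPre, Set.mem_setOf_eq, Set.mem_compl_iff, not_exists]
  tauto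

lemma pWinv_empty {S T : Type*} (f : S → Option T) :
    pWinv f (∅ : Set T) = (pDom f)ᶜ := by
  ext x
  simp only [pWinv, pDom, Set.mem_setOf_eq, Set.mem_compl_iff, not_not,
    Set.mem_empty_iff_false]
  cases h : f x with
  | none => simp
  | some y => simp [h]

theorem stmt5 {S T : Type*} [Fintype S] [Fintype T]
    (LS : Set (Set S)) (LT : Set (Set T))
    (hbS : ∀ B ∈ LS, 2 ≤ B.ncard)
    (hpS : ∀ x y : S, x ≠ y → ∃! B, B ∈ LS ∧ x ∈ B ∧ y ∈ B)
    (hbT : ∀ B ∈ LT, 2 ≤ B.ncard)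
    (hpT : ∀ x y : T, x ≠ y → ∃! B, B ∈ LT ∧ x ∈ B ∧ y ∈ B)
    (f : S → Option T) :
    (∀ F : Set T, Subsys LT F → Subsys LS (pWinv f F)) ↔ Morphism LS LT f := by
  constructor
  · intro h
    constructor
    · have := h ∅ (by intro x hx; exact absurd hx (Set.notMem_empty x))
      rw [pWinv_empty] at this
      exact this
    · intro O hO
      have := h Oᶜ hO
      rw [pWinv_compl] at this
      exact this
  · rintro ⟨_, h2⟩ F hF
    have : IsOpenSet LT Fᶜ := by unfold IsOpenSet; rwa [compl_compl]
    have := h2 Fᶜ this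
    unfold IsOpenSet at this
    rwa [← pWinv_compl, compl_compl] at this
end

section
/- Let X = (S, L) and Y = (T, L') be PBDs. A partial function f : S → T is a Wilson morphism if and only if the domain of f is open and for every block B ∈ L, either |f(B)| ≤ 1, or f is defined on all of B, is injective on B, and there is a block B' ∈ L' with f(B) ⊆ B'. -/
theorem stmt7 {S T : Type*} [Fintype S] [Fintype T]
    (LS : Set (Set S)) (LT : Set (Set T))
    (hbS : ∀ B ∈ LS, 2 ≤ B.ncard)
    (hpS : ∀ x y : S, x ≠ y → ∃! B, B ∈ LS ∧ x ∈ B ∧ y ∈ B)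
    (hbT : ∀ B ∈ LT, 2 ≤ B.ncard)
    (hpT : ∀ x y : T, x ≠ y → ∃! B, B ∈ LT ∧ x ∈ B ∧ y ∈ B)
    (f : S → Option T) :
    Morphism LS LT f ↔
      (IsOpenSet LS (pDom f) ∧
        ∀ B ∈ LS,
          (imOn f B).ncard ≤ 1 ∨
          (B ⊆ pDom f ∧ (∀ x ∈ B, ∀ y ∈ B, f x = f y → x = y) ∧
            ∃ B' ∈ LT, imOn f B ⊆ B')) := by

  -- membership in complement of pPre
  have memPreC : ∀ (O : Set T) (x : S), x ∈ (pPre f O)ᶜ ↔ ∀ z, f x = some z → z ∉ O := by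
    intro O x
    simp only [Set.mem_compl_iff, pPre, Set.mem_setOf_eq, not_exists]
    constructor
    · intro h z hz hzO; exact h z ⟨hzO, hz⟩
    · rintro h z ⟨hzO, hz⟩; exact h z hz hzO
  have blockOpen : ∀ B' ∈ LT, IsOpenSet LT B'ᶜ := by
    intro B' hB' a ha b hb hab C hC haC hbC
    rw [compl_compl] at ha hb ⊢
    obtain ⟨D, hD, huniq⟩ := hpT a b hab
    have h1 := huniq C ⟨hC, haC, hbC⟩
    have h2 := huniq B' ⟨hB', ha, hb⟩
    rw [h1, h2]
  have singOpen : ∀ y : T, IsOpenSet LT {y}ᶜ := by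
    intro y a ha b hb hab C hC haC hbC
    rw [compl_compl] at ha hb
    exact absurd (ha.trans hb.symm) hab
  constructor
  · rintro ⟨hdom, hcont⟩
    refine ⟨hdom, fun B hB => ?_⟩
    by_cases h1 : ∀ y ∈ imOn f B, ∀ y' ∈ imOn f B, y = y'
    · left
      exact (Set.ncard_le_one (Set.toFinite _)).mpr h1
    · right
      push_neg at h1
      obtain ⟨y1, hy1im, y2, hy2im, hne⟩ := h1
      obtain ⟨x1, hx1B, hfx1⟩ := hy1im
      obtain ⟨x2, hx2B, hfx2⟩ := hy2im
      obtain ⟨B', ⟨hB'T, hyB1, hyB2⟩, _⟩ := hpT y1 y2 hne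
      have hx12 : x1 ≠ x2 := by
        rintro rfl; rw [hfx1] at hfx2; exact hne (Option.some.inj hfx2)
      -- subsystem from singleton y: any x with f x = some y or f x = none lies in it
      have hC : ∀ y : T, Subsys LS (pPre f ({y}ᶜ))ᶜ := fun y => hcont _ (singOpen y)
      have hmemC : ∀ (y : T) (x : S), (f x = none ∨ f x = some y) → x ∈ (pPre f ({y}ᶜ))ᶜ := by
        intro y x hx
        rw [memPreC]
        intro z hz
        rcases hx with h | h
        · rw [h] at hz; exact absurd hz (by simp)
        · rw [h] at hz
          simp only [Set.mem_compl_iff, Set.mem_singleton_iff, not_not]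
          exact (Option.some.inj hz).symm
      -- Claim A : B ⊆ pDom f
      have hBdom : B ⊆ pDom f := by
        intro x0 hx0B
        by_contra hx0
        have hfx0 : f x0 = none := not_not.mp hx0
        have hx01 : x0 ≠ x1 := by rintro rfl; rw [hfx0] at hfx1; exact Option.some_ne_none _ hfx1.symm
        have hsubB := hC y1 x0 (hmemC y1 x0 (Or.inl hfx0)) x1 (hmemC y1 x1 (Or.inr hfx1))
          hx01 B hB hx0B hx1B
        have := (memPreC _ x2).mp (hsubB hx2B) y2 hfx2
        simp only [Set.mem_compl_iff, Set.mem_singleton_iff, not_not] at this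
        exact hne this.symm
      refine ⟨hBdom, ?_, B', hB'T, ?_⟩
      · -- injectivity
        intro a haB b hbB hfab
        by_contra hab
        obtain ⟨w, hw⟩ := Option.ne_none_iff_exists'.mp (hBdom haB)
        have hwb : f b = some w := by rw [← hfab]; exact hw
        have hsubB := hC w a (hmemC w a (Or.inr hw)) b (hmemC w b (Or.inr hwb))
          hab B hB haB hbB
        have e1 := (memPreC _ x1).mp (hsubB hx1B) y1 hfx1
        have e2 := (memPreC _ x2).mp (hsubB hx2B) y2 hfx2
        simp only [Set.mem_compl_iff, Set.mem_singleton_iff, not_not] at e1 e2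
        exact hne (e1.trans e2.symm)
      · -- image contained in B'
        have hmB' : ∀ (x : S) (y : T), f x = some y → y ∈ B' → x ∈ (pPre f (B'ᶜ))ᶜ := by
          intro x y hxy hyB'
          rw [memPreC]
          intro z hz
          rw [hxy] at hz
          simp only [Set.mem_compl_iff, not_not]
          rw [← Option.some.inj hz]; exact hyB'
        have hsubB := hcont _ (blockOpen B' hB'T) x1 (hmB' x1 y1 hfx1 hyB1)
          x2 (hmB' x2 y2 hfx2 hyB2) hx12 B hB hx1B hx2B
        rintro y ⟨x, hxB, hxy⟩
        have := (memPreC _ x).mp (hsubB hxB) y hxy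
        simpa using this
  · rintro ⟨hdom, hblocks⟩
    refine ⟨hdom, fun O hO => ?_⟩
    intro a ha b hb hab B hB haB hbB z hzB
    rw [memPreC] at ha hb ⊢
    intro w hw hwO
    rcases hblocks B hB with hcard | ⟨hBdom, hinj, B', hB'T, him⟩
    · -- subsingleton image
      have hsub : (imOn f B).Subsingleton := fun y hy y' hy' =>
        (Set.ncard_le_one (Set.toFinite _)).mp hcard y hy y' hy' 
      by_cases hax : f a = none
      · by_cases hbx : f b = none
        · have hsubB := hdom a (fun h => h hax) b (fun h => h hbx) hab B hB haB hbB
          have hz := not_not.mp (hsubB hzB)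
          rw [hz] at hw
          exact Option.some_ne_none _ hw.symm
        · obtain ⟨yb, hyb⟩ := Option.ne_none_iff_exists'.mp hbx
          have : w = yb := hsub ⟨z, hzB, hw⟩ ⟨b, hbB, hyb⟩
          exact hb yb hyb (this ▸ hwO)
      · obtain ⟨ya, hya⟩ := Option.ne_none_iff_exists'.mp hax
        have : w = ya := hsub ⟨z, hzB, hw⟩ ⟨a, haB, hya⟩
        exact ha ya hya (this ▸ hwO)
    · obtain ⟨ya, hya⟩ := Option.ne_none_iff_exists'.mp (hBdom haB)
      obtain ⟨yb, hyb⟩ := Option.ne_none_iff_exists'.mp (hBdom hbB)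
      have hyab : ya ≠ yb := by
        rintro rfl
        exact hab (hinj a haB b hbB (hya.trans hyb.symm))
      have hB'sub := hO ya (ha ya hya) yb (hb yb hyb) hyab B' hB'T
        (him ⟨a, haB, hya⟩) (him ⟨b, hbB, hyb⟩)
      exact hB'sub (him ⟨z, hzB, hw⟩) hwO
end

section
/- Let X = (S, L) be a nontrivial PBD (at least two blocks). A permutation f : S → S is a Wilson morphism from X to itself if and only if f is an automorphism of X, i.e., f maps every block of L onto a block of L. -/
theorem stmt8 {S : Type*} [Fintype S]
    (L : Set (Set S))
    (hb : ∀ B ∈ L, 2 ≤ B.ncard)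
    (hp : ∀ x y : S, x ≠ y → ∃! B, B ∈ L ∧ x ∈ B ∧ y ∈ B)
    (hnontriv : ∃ B₁ ∈ L, ∃ B₂ ∈ L, B₁ ≠ B₂)
    (f : Equiv.Perm S) :
    Morphism L L (fun x => some (f x)) ↔ ∀ B ∈ L, f '' B ∈ L := by
  classical
  have hfin : ∀ s : Set S, s.Finite := fun s => Set.toFinite s
  constructor
  · -- Morphism → automorphism
    intro hM
    -- blocks are subsystems
    have hbsub : ∀ B' ∈ L, Subsys L B' := by
      intro B' hB' x hx y hy hxy B'' hB'' hx'' hy''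
      obtain ⟨Bu, _, hu⟩ := hp x y hxy
      have h1 := hu B'' ⟨hB'', hx'', hy''⟩
      have h2 := hu B' ⟨hB', hx, hy⟩
      rw [h1, ← h2]
    -- preimage of a block is a subsystem
    have hsub : ∀ B' ∈ L, Subsys L (f ⁻¹' B') := by
      intro B' hB'
      have hopen : IsOpenSet L B'ᶜ := by
        unfold IsOpenSet
        rw [compl_compl]
        exact hbsub B' hB'
      have h := hM.2 B'ᶜ hopen
      unfold IsOpenSet at h
      have he : (pPre (fun x => some (f x)) B'ᶜ)ᶜ = f ⁻¹' B' := by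
        ext x
        simp [pPre]
      rwa [he] at h
    -- each block has two distinct points
    have two_pts : ∀ B'' ∈ L, ∃ x ∈ B'', ∃ y ∈ B'', x ≠ y := by
      intro B'' hB''
      exact (Set.one_lt_ncard (hfin B'')).mp (lt_of_lt_of_le one_lt_two (hb B'' hB''))
    -- uniqueness of the block containing the image of a block
    have huniq : ∀ B ∈ L, ∀ B₀ ∈ L, ∀ B₁ ∈ L,
        f '' B ⊆ B₀ → f '' B ⊆ B₁ → B₀ = B₁ := by
      intro B hB B₀ hB₀ B₁ hB₁ h0 h1
      obtain ⟨x, hx, y, hy, hxy⟩ := two_pts B hB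
      have hfxy : f x ≠ f y := fun h => hxy (f.injective h)
      obtain ⟨Bu, _, hu⟩ := hp (f x) (f y) hfxy
      have e0 := hu B₀ ⟨hB₀, h0 ⟨x, hx, rfl⟩, h0 ⟨y, hy, rfl⟩⟩
      have e1 := hu B₁ ⟨hB₁, h1 ⟨x, hx, rfl⟩, h1 ⟨y, hy, rfl⟩⟩
      rw [e0, e1]
    -- for every block B₀ there is a block mapping into it
    have mapsOnto : ∀ B₀ : Set S, ∃ B : Set S, B₀ ∈ L → B ∈ L ∧ f '' B ⊆ B₀ := by
      intro B₀
      by_cases hB₀ : B₀ ∈ L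
      · obtain ⟨u, hu, v, hv, huv⟩ := two_pts B₀ hB₀
        have hxy : f.symm u ≠ f.symm v := fun h => huv (f.symm.injective h)
        obtain ⟨B, ⟨hBL, hxB, hyB⟩, _⟩ := hp (f.symm u) (f.symm v) hxy
        refine ⟨B, fun _ => ⟨hBL, ?_⟩⟩
        have hBsub : B ⊆ f ⁻¹' B₀ := by
          refine hsub B₀ hB₀ (f.symm u) ?_ (f.symm v) ?_ hxy B hBL hxB hyB
          · show f (f.symm u) ∈ B₀; simpa using hu
          · show f (f.symm v) ∈ B₀; simpa using hv
        exact Set.image_subset_iff.mpr hBsub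
      · exact ⟨∅, fun h => absurd h hB₀⟩
    choose ψ hψ using mapsOnto
    have hLfin : L.Finite := Set.toFinite L
    set T : Finset (Set S) := hLfin.toFinset with hT
    have hmemT : ∀ B : Set S, B ∈ T ↔ B ∈ L := fun B => hLfin.mem_toFinset
    -- ψ is injective on T
    have hinj : Set.InjOn ψ ↑T := by
      intro B₀ hB₀ B₁ hB₁ h
      have hB₀' := (hmemT B₀).mp hB₀
      have hB₁' := (hmemT B₁).mp hB₁
      obtain ⟨hψ₀, hs₀⟩ := hψ B₀ hB₀'
      obtain ⟨hψ₁, hs₁⟩ := hψ B₁ hB₁'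
      rw [h] at hs₀
      exact huniq (ψ B₁) hψ₁ B₀ hB₀' B₁ hB₁' hs₀ hs₁
    have hmaps : ∀ B₀ ∈ T, ψ B₀ ∈ T := by
      intro B₀ hB₀
      exact (hmemT _).mpr (hψ B₀ ((hmemT B₀).mp hB₀)).1
    -- image of T under ψ is T
    have himg : T.image ψ = T := by
      apply Finset.eq_of_subset_of_card_le
      · intro B hB
        obtain ⟨B₀, hB₀, rfl⟩ := Finset.mem_image.mp hB
        exact hmaps B₀ hB₀
      · rw [Finset.card_image_of_injOn hinj]
    -- sum argument
    have hsum : ∑ B₀ ∈ T, (ψ B₀).ncard = ∑ B ∈ T, B.ncard := by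
      rw [← Finset.sum_image (fun x hx y hy h => hinj hx hy h), himg]
    have hle : ∀ B₀ ∈ T, (ψ B₀).ncard ≤ B₀.ncard := by
      intro B₀ hB₀
      obtain ⟨hψ₀, hs₀⟩ := hψ B₀ ((hmemT B₀).mp hB₀)
      calc (ψ B₀).ncard = (f '' ψ B₀).ncard :=
            (Set.ncard_image_of_injective _ f.injective).symm
        _ ≤ B₀.ncard := Set.ncard_le_ncard hs₀ (hfin B₀)
    have heq : ∀ B₀ ∈ T, (ψ B₀).ncard = B₀.ncard :=
      fun B₀ hB₀ => (Finset.sum_eq_sum_iff_of_le hle).mp hsum B₀ hB₀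
    -- conclude
    intro B hB
    have hBT : B ∈ T := (hmemT B).mpr hB
    obtain ⟨B₀, hB₀T, hψB₀⟩ : ∃ B₀ ∈ T, ψ B₀ = B := by
      have : B ∈ T.image ψ := by rw [himg]; exact hBT
      obtain ⟨B₀, hB₀, h⟩ := Finset.mem_image.mp this
      exact ⟨B₀, hB₀, h⟩
    have hB₀L := (hmemT B₀).mp hB₀T
    obtain ⟨_, hs₀⟩ := hψ B₀ hB₀L
    have hcard : B₀.ncard ≤ (f '' ψ B₀).ncard := by
      rw [Set.ncard_image_of_injective _ f.injective, heq B₀ hB₀T]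
    have : f '' ψ B₀ = B₀ := Set.eq_of_subset_of_ncard_le hs₀ hcard (hfin B₀)
    rw [hψB₀] at this
    rw [this]
    exact hB₀L
  · -- automorphism → Morphism
    intro hAut
    constructor
    · intro x hx
      simp [pDom] at hx
    · intro O hO
      intro x hx y hy hxy B hB hxB hyB z hzB
      have hfx : f x ∈ Oᶜ := by
        intro h
        exact hx ⟨f x, h, rfl⟩
      have hfy : f y ∈ Oᶜ := by
        intro h
        exact hy ⟨f y, h, rfl⟩
      have hfxy : f x ≠ f y := fun h => hxy (f.injective h)
      have hsub : f '' B ⊆ Oᶜ :=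
        hO (f x) hfx (f y) hfy hfxy (f '' B) (hAut B hB) ⟨x, hxB, rfl⟩ ⟨y, hyB, rfl⟩
      intro ⟨w, hw, hfw⟩
      exact hsub ⟨z, hzB, (Option.some_inj.mp hfw)⟩ hw
end

section
/- Let X be a PBD and e an idempotent element of the Wilson monoid W(X) (i.e., e ∘ e = e as partial functions). Then the image of e is a subsystem of X. -/
theorem stmt10 {S : Type*} [Fintype S]
    (L : Set (Set S))
    (hb : ∀ B ∈ L, 2 ≤ B.ncard)
    (hp : ∀ x y : S, x ≠ y → ∃! B, B ∈ L ∧ x ∈ B ∧ y ∈ B)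
    (e : S → Option S) (he : Morphism L L e) (hid : pComp e e = e) :
    Subsys L (pIm e) := by
  -- fixed point property
  have hfix : ∀ u v, e u = some v → e v = some v := by
    intro u v h
    have h1 := congrFun hid u
    simp only [pComp, h] at h1
    simpa using h1
  -- key: Wilson inverse images of subsystems are subsystems
  have key : ∀ A : Set S, Subsys L A → Subsys L (pWinv e A) := by
    intro A hA
    have h := he.2 Aᶜ (by simpa [IsOpenSet, compl_compl] using hA)
    have heq : (pPre e Aᶜ)ᶜ = pWinv e A := by
      ext a
      simp only [pPre, pWinv, Set.mem_compl_iff, Set.mem_setOf_eq, Set.mem_compl_iff]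
      push_neg
      constructor
      · intro h' v hv
        by_contra hvA
        exact (h' v hvA).elim hv
      · intro h' v hvA hv
        exact hvA (h' v hv)
    rwa [IsOpenSet, heq] at h
  have hsing : ∀ v : S, Subsys L ({v} : Set S) := by
    intro v a ha b hb' hab
    simp only [Set.mem_singleton_iff] at ha hb'
    exact absurd (ha.trans hb'.symm) hab
  intro x hx y hy hxy B hB hxB hyB
  obtain ⟨a, ha⟩ := hx
  obtain ⟨b, hb'⟩ := hy
  have hex : e x = some x := hfix a x ha
  have hey : e y = some y := hfix b y hb'
  have hBsub : Subsys L B := by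
    intro p hpB q hqB hpq B' hB' hpB' hqB'
    have := ((hp p q hpq).unique ⟨hB', hpB', hqB'⟩ ⟨hB, hpB, hqB⟩)
    rw [this]
  -- B maps into B
  have hmap : B ⊆ pWinv e B := by
    refine key B hBsub x ?_ y ?_ hxy B hB hxB hyB
    · intro v hv; rw [hex] at hv; exact (Option.some_injective _ hv) ▸ hxB
    · intro v hv; rw [hey] at hv; exact (Option.some_injective _ hv) ▸ hyB
  -- definedness on B
  have hdef : ∀ z ∈ B, ∃ v, e z = some v := by
    intro z hz
    cases h : e z with
    | some v => exact ⟨v, rfl⟩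
    | none =>
      exfalso
      have hzx : z ≠ x := by rintro rfl; rw [hex] at h; exact nomatch h
      have hsub : B ⊆ pWinv e {x} := by
        refine key {x} (hsing x) z ?_ x ?_ hzx B hB hz hxB
        · intro v hv; rw [h] at hv; exact nomatch hv
        · intro v hv; rw [hex] at hv
          exact (Option.some_injective _ hv) ▸ rfl
      have := hsub hyB y hey
      exact hxy (this.symm)
  -- injectivity on B
  have hinj : ∀ z ∈ B, ∀ w ∈ B, ∀ v, e z = some v → e w = some v → z = w := by
    intro z hz w hw v hzv hwv
    by_contra hzw
    have hsub : B ⊆ pWinv e {v} := by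
      refine key {v} (hsing v) z ?_ w ?_ hzw B hB hz hw
      · intro u hu; rw [hzv] at hu
        exact (Option.some_injective _ hu) ▸ rfl
      · intro u hu; rw [hwv] at hu
        exact (Option.some_injective _ hu) ▸ rfl
    have hxv : x = v := hsub hxB x hex
    have hyv : y = v := hsub hyB y hey
    exact hxy (hxv.trans hyv.symm)
  -- finish via finiteness
  set g : S → S := fun a => (e a).getD a with hg
  have hgspec : ∀ z ∈ B, e z = some (g z) := by
    intro z hz
    obtain ⟨v, hv⟩ := hdef z hz
    simp [hg, hv]
  have hmapsTo : Set.MapsTo g B B := by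
    intro z hz
    exact hmap hz (g z) (hgspec z hz)
  have hinjOn : Set.InjOn g B := by
    intro z hz w hw hzw
    exact hinj z hz w hw (g z) (hgspec z hz) (hzw ▸ hgspec w hw)
  have hfin : B.Finite := Set.toFinite B
  have hbij : Set.BijOn g B B :=
    hfin.injOn_iff_bijOn_of_mapsTo hmapsTo |>.mp hinjOn
  intro z hz
  obtain ⟨w, hw, hwz⟩ := hbij.surjOn hz
  exact ⟨w, hwz ▸ hgspec w hw⟩
end

section
/- Let X be a PBD and f a regular element of the Wilson monoid W(X), i.e., there exists g ∈ W(X) with f ∘ g ∘ f = f. Then the image of f is a subsystem of X. -/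
theorem stmt11 {S : Type*} [Fintype S]
    (L : Set (Set S))
    (hb : ∀ B ∈ L, 2 ≤ B.ncard)
    (hp : ∀ x y : S, x ≠ y → ∃! B, B ∈ L ∧ x ∈ B ∧ y ∈ B)
    (f : S → Option S) (hf : Morphism L L f)
    (hreg : ∃ g : S → Option S, Morphism L L g ∧ pComp f (pComp g f) = f) :
    Subsys L (pIm f) := by
  intro x hx y hy hxy B hB hxB hyB
  obtain ⟨g, hg, hfgf⟩ := hreg
  set h : S → Option S := fun s => (g s).bind f with hhdef
  have hfix : ∀ z ∈ pIm f, h z = some z := by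
    rintro z ⟨a, ha⟩
    have := congrFun hfgf a
    simp only [pComp, ha, Option.bind_some] at this
    simpa [h] using this
  have him : ∀ s c, h s = some c → c ∈ pIm f := by
    intro s c hc
    cases hgs : g s with
    | none => simp [h, hgs] at hc
    | some w => simp only [h, hgs, Option.bind_some] at hc; exact ⟨w, hc⟩
  have hpre : ∀ O : Set S, IsOpenSet L O → IsOpenSet L (pPre h O) := by
    intro O hO
    have heq : pPre h O = pPre g (pPre f O) := by
      ext s
      constructor
      · rintro ⟨z, hz, hsz⟩
        cases hgs : g s with
        | none => simp [h, hgs] at hsz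
        | some w =>
          simp only [h, hgs, Option.bind_some] at hsz
          exact ⟨w, ⟨z, hz, hsz⟩, hgs⟩
      · rintro ⟨w, ⟨z, hz, hw⟩, hgs⟩
        exact ⟨z, hz, by simp [h, hgs, hw]⟩
    rw [heq]
    exact hg.2 _ (hf.2 _ hO)
  have hsingle : ∀ p : S, IsOpenSet L ({p}ᶜ) := by
    intro p
    unfold IsOpenSet
    rw [compl_compl]
    intro a ha b hb' hab
    simp only [Set.mem_singleton_iff] at ha hb'
    exact absurd (ha.trans hb'.symm) hab
  have hBopen : IsOpenSet L Bᶜ := by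
    unfold IsOpenSet
    rw [compl_compl]
    intro a ha b hb' hab C hC haC hbC
    obtain ⟨U, _, hUuniq⟩ := hp a b hab
    have h1 := hUuniq C ⟨hC, haC, hbC⟩
    have h2 := hUuniq B ⟨hB, ha, hb'⟩
    rw [h1, h2]
  have hhx := hfix x hx
  have hhy := hfix y hy
  have hstepA : ∀ b ∈ B, ∀ c, h b = some c → c ∈ B := by
    have hO := hpre Bᶜ hBopen
    have hxO : x ∈ (pPre h Bᶜ)ᶜ := by
      rintro ⟨z, hz, hxz⟩
      rw [hhx] at hxz
      injection hxz with e
      exact hz (e ▸ hxB)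
    have hyO : y ∈ (pPre h Bᶜ)ᶜ := by
      rintro ⟨z, hz, hyz⟩
      rw [hhy] at hyz
      injection hyz with e
      exact hz (e ▸ hyB)
    intro b hb' c hc
    by_contra hcB
    exact hO x hxO y hyO hxy B hB hxB hyB hb' ⟨c, hcB, hc⟩
  intro b hb'
  cases hhb : h b with
  | none =>
    exfalso
    have hO := hpre _ (hsingle x)
    have hxO : x ∈ (pPre h ({x}ᶜ))ᶜ := by
      rintro ⟨z, hz, hxz⟩
      rw [hhx] at hxz
      injection hxz with e
      exact hz (by simp [e])
    have hbO : b ∈ (pPre h ({x}ᶜ))ᶜ := by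
      rintro ⟨z, hz, hbz⟩
      rw [hhb] at hbz
      cases hbz
    have hbx : b ≠ x := by
      intro e; rw [e, hhx] at hhb; cases hhb
    have hyO := hO b hbO x hxO hbx B hB hb' hxB hyB
    exact hyO ⟨y, by simp [Ne.symm hxy], hhy⟩
  | some c =>
    have hcf : c ∈ pIm f := him b c hhb
    have hcB := hstepA b hb' c hhb
    by_cases hcb : c = b
    · exact hcb ▸ hcf
    · exfalso
      have hhc := hfix c hcf
      have hO := hpre _ (hsingle c)
      have hbO : b ∈ (pPre h ({c}ᶜ))ᶜ := by
        rintro ⟨z, hz, hbz⟩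
        rw [hhb] at hbz
        injection hbz with e
        exact hz (by simp [e])
      have hcO : c ∈ (pPre h ({c}ᶜ))ᶜ := by
        rintro ⟨z, hz, hcz⟩
        rw [hhc] at hcz
        injection hcz with e
        exact hz (by simp [e])
      have hbc : b ≠ c := Ne.symm hcb
      have hsub := hO b hbO c hcO hbc B hB hb' hcB
      have hxc : x = c := by
        by_contra hne
        exact hsub hxB ⟨x, by simp [hne], hhx⟩
      have hyc : y = c := by
        by_contra hne
        exact hsub hyB ⟨y, by simp [hne], hhy⟩
      exact hxy (hxc.trans hyc.symm)
end

section
/- Let X be a (v, k, 1)-BIBD with k ≥ 2. If X has a proper subsystem of order u < v, then v ≥ (k−1)u + 1. In particular, for a Steiner triple system (k = 3), v ≥ 2u + 1. -/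
theorem stmt12 {V : Type*} [Fintype V] (L : Set (Set V)) (k : ℕ) (hk : 2 ≤ k)
    (hsize : ∀ B ∈ L, B.ncard = k)
    (hpair : ∀ x y : V, x ≠ y → ∃! B, B ∈ L ∧ x ∈ B ∧ y ∈ B)
    (X : Set V) (hX : Subsys L X) (hlt : X.ncard < Fintype.card V) :
    (k - 1) * X.ncard + 1 ≤ Fintype.card V := by
  classical
  -- find a point outside X
  obtain ⟨p, hp⟩ : ∃ p, p ∉ X := by
    by_contra h
    push_neg at h
    have : X = Set.univ := Set.eq_univ_iff_forall.mpr h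
    rw [this, Set.ncard_univ, Nat.card_eq_fintype_card] at hlt
    exact lt_irrefl _ hlt
  haveI : Fintype X := Fintype.ofFinite X
  -- block through p and x
  have hne : ∀ x : X, (x : V) ≠ p := fun x h => hp (h ▸ x.2)
  choose b hbL hbx hbp using fun x : X => (hpair x p (hne x)).exists
  -- b x ∩ X = {x}
  have hmeet : ∀ x : X, ∀ y ∈ b x, y ∈ X → y = (x : V) := by
    intro x y hyB hyX
    by_contra hne'
    have := hX y hyX x x.2 hne' (b x) (hbL x) hyB (hbx x)
    exact hp (this (hbp x))
  -- blocks through p are pairwise disjoint away from p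
  have hdisj : ∀ x y : X, x ≠ y → ∀ q, q ∈ b x → q ∈ b y → q = p := by
    intro x y hxy q hqx hqy
    by_contra hqp
    have h1 := (hpair q p hqp).unique ⟨hbL x, hqx, hbp x⟩ ⟨hbL y, hqy, hbp y⟩
    have := hmeet x (y : V) (h1 ▸ hbx y) y.2
    exact hxy (Subtype.ext this.symm)
  -- finite sets
  set f : X → Finset V := fun x => (b x \ {p}).toFinset with hf
  have hcardf : ∀ x : X, (f x).card = k - 1 := by
    intro x
    have hfin : (b x).Finite := Set.toFinite _
    rw [hf]
    rw [← Set.ncard_eq_toFinset_card',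
      Set.ncard_diff_singleton_of_mem (hbp x), hsize _ (hbL x)]
  have hdisjf : ((Finset.univ : Finset X) : Set X).PairwiseDisjoint f := by
    intro x _ y _ hxy
    simp only [Finset.disjoint_left, hf]
    intro a ha hb'
    simp only [Set.mem_toFinset, Set.mem_diff, Set.mem_singleton_iff] at ha hb'
    exact ha.2 (hdisj x y hxy a ha.1 hb'.1)
  have hcard : (Finset.univ.biUnion f).card = Fintype.card X * (k - 1) := by
    rw [Finset.card_biUnion hdisjf]
    simp [hcardf, Finset.card_univ]
  have hsub : Finset.univ.biUnion f ⊆ Finset.univ.erase p := by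
    intro a ha
    rw [Finset.mem_biUnion] at ha
    obtain ⟨x, _, hax⟩ := ha
    simp only [hf, Set.mem_toFinset, Set.mem_diff, Set.mem_singleton_iff] at hax
    exact Finset.mem_erase.mpr ⟨hax.2, Finset.mem_univ a⟩
  have h1 := Finset.card_le_card hsub
  rw [hcard, Finset.card_erase_of_mem (Finset.mem_univ p), Finset.card_univ] at h1
  have hX' : Fintype.card X = X.ncard := by
    rw [← Nat.card_eq_fintype_card, Nat.card_coe_set_eq]
  have hpos : 1 ≤ Fintype.card V := Fintype.card_pos_iff.mpr ⟨p⟩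
  rw [hX'] at h1
  have := Nat.mul_comm (k - 1) X.ncard
  omega
end

section
/- Let X and Y be PBDs on point sets S and T, and f : S → T a Wilson morphism. Then the co-domain D = S \ Dom(f) is a subsystem of X, and for every y ∈ T, the set D ∪ f^{-1}(y) is a subsystem of X. Moreover, if B is a block of Y with f^{-1}(B) nonempty, then setting Z = f^{-1}(B), G = {f^{-1}(y) : y ∈ B ∩ f(S)}, and L₀ the set of blocks of X contained in Z meeting each class of G in at most one point, the triple (Z, G, L₀) is a group divisible design: every pair of distinct points of Z lies in exactly one group of G or exactly one block of L₀, but not both. -/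
theorem stmt13 {S T : Type*} [Fintype S] [Fintype T]
    (LS : Set (Set S)) (LT : Set (Set T))
    (hbS : ∀ B ∈ LS, 2 ≤ B.ncard)
    (hpS : ∀ x y : S, x ≠ y → ∃! B, B ∈ LS ∧ x ∈ B ∧ y ∈ B)
    (hbT : ∀ B ∈ LT, 2 ≤ B.ncard)
    (hpT : ∀ x y : T, x ≠ y → ∃! B, B ∈ LT ∧ x ∈ B ∧ y ∈ B)
    (f : S → Option T)
    (hf : IsOpenSet LS (pDom f) ∧
      ∀ F : Set T, Subsys LT F → Subsys LS (pWinv f F)) :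
    -- the co-domain is a subsystem,
    Subsys LS (pDom f)ᶜ ∧
    -- so is D ∪ f⁻¹(y) for every y,
    (∀ y : T, Subsys LS ((pDom f)ᶜ ∪ {x | f x = some y})) ∧
    -- and each nonempty fibre of a block is a group divisible design:
    (∀ B ∈ LT, (pPre f B).Nonempty →
      let Z : Set S := pPre f B
      let G : Set (Set S) :=
        {g | ∃ y, y ∈ B ∧ y ∈ pIm f ∧ g = {x | f x = some y}}
      let L₀ : Set (Set S) :=
        {b | b ∈ LS ∧ b ⊆ Z ∧ ∀ g ∈ G, (b ∩ g).ncard ≤ 1}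
      -- the groups partition Z,
      (∀ z ∈ Z, ∃! g, g ∈ G ∧ z ∈ g) ∧
      -- and every pair of distinct points of Z lies in exactly one group or
      -- exactly one block of L₀, but not both.
      ∀ x₁ ∈ Z, ∀ x₂ ∈ Z, x₁ ≠ x₂ →
        ((∃! g, g ∈ G ∧ x₁ ∈ g ∧ x₂ ∈ g) ∧ ¬∃ b ∈ L₀, x₁ ∈ b ∧ x₂ ∈ b) ∨
        ((∃! b, b ∈ L₀ ∧ x₁ ∈ b ∧ x₂ ∈ b) ∧ ¬∃ g ∈ G, x₁ ∈ g ∧ x₂ ∈ g)) := by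

  obtain ⟨hopen, hW⟩ := hf
  -- Part 2 (proved first, for all y): D ∪ fib y is a subsystem
  have hfib : ∀ y : T, Subsys LS ((pDom f)ᶜ ∪ {x | f x = some y}) := by
    intro y
    have hsub : Subsys LT ({y} : Set T) := by
      intro a ha b hb hne; simp only [Set.mem_singleton_iff] at ha hb
      exact absurd (ha.trans hb.symm) hne
    have h := hW _ hsub
    have heq : pWinv f ({y} : Set T) = (pDom f)ᶜ ∪ {x | f x = some y} := by
      ext x
      simp only [pWinv, pDom, Set.mem_setOf_eq, Set.mem_union, Set.mem_compl_iff,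
        Set.mem_singleton_iff, ne_eq, not_not]
      cases hfx : f x with
      | none => simp
      | some z =>
        constructor
        · intro h; right; rw [h z rfl]
        · rintro (h | h)
          · simp at h
          · intro y' hy'
            simp only [Option.some_inj] at h hy'
            rw [← hy', h]
    rwa [heq] at h
  have hD : Subsys LS (pDom f)ᶜ := by
    have hsub : Subsys LT (∅ : Set T) := by intro a ha; simp at ha
    have h := hW _ hsub
    have heq : pWinv f (∅ : Set T) = (pDom f)ᶜ := by
      ext x
      simp only [pWinv, pDom, Set.mem_setOf_eq, Set.mem_compl_iff, ne_eq, not_not,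
        Set.mem_empty_iff_false]
      cases hfx : f x with
      | none => simp
      | some z => simp [hfx]
    rwa [heq] at h
  refine ⟨hD, hfib, ?_⟩
  intro B hB hne Z G L₀
  -- B is a subsystem of LT
  have hBsub : Subsys LT B := by
    intro a ha b hb hab B' hB' haB' hbB'
    obtain ⟨C, _, hCuniq⟩ := hpT a b hab
    have h1 := hCuniq B ⟨hB, ha, hb⟩
    have h2 := hCuniq B' ⟨hB', haB', hbB'⟩
    rw [h2, h1]
  have hWB : Subsys LS (pWinv f B) := hW _ hBsub
  have hZW : Z ⊆ pWinv f B := by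
    rintro x ⟨y, hy, hfx⟩ y' hy'
    rw [hfx, Option.some_inj] at hy'; rwa [← hy']
  -- groups partition Z
  have hpart : ∀ z ∈ Z, ∃! g, g ∈ G ∧ z ∈ g := by
    rintro z ⟨y, hy, hfz⟩
    refine ⟨{x | f x = some y}, ⟨⟨y, hy, ⟨z, hfz⟩, rfl⟩, hfz⟩, ?_⟩
    rintro g ⟨⟨y', _, _, rfl⟩, hzg⟩
    simp only [Set.mem_setOf_eq] at hzg
    rw [hzg, Option.some_inj] at hfz
    rw [hfz]
  refine ⟨hpart, ?_⟩
  rintro x₁ ⟨y₁, hy₁, hfx₁⟩ x₂ ⟨y₂, hy₂, hfx₂⟩ hx12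
  by_cases hyy : y₁ = y₂
  · -- same group; no block can contain both
    left
    constructor
    · refine ⟨{x | f x = some y₁}, ⟨⟨y₁, hy₁, ⟨x₁, hfx₁⟩, rfl⟩, hfx₁, by
        simpa [hyy] using hfx₂⟩, ?_⟩
      rintro g ⟨⟨y', _, _, rfl⟩, hg1, _⟩
      simp only [Set.mem_setOf_eq] at hg1
      rw [hg1, Option.some_inj] at hfx₁
      rw [hfx₁]
    · rintro ⟨b, ⟨_, _, hbmeet⟩, hb1, hb2⟩
      have hg : {x | f x = some y₁} ∈ G := ⟨y₁, hy₁, ⟨x₁, hfx₁⟩, rfl⟩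
      have hle := hbmeet _ hg
      rw [Set.ncard_le_one_iff] at hle
      exact hx12 (hle ⟨hb1, hfx₁⟩ ⟨hb2, by simpa [hyy] using hfx₂⟩)
  · -- different groups: unique block, no group
    right
    obtain ⟨b, ⟨hbLS, hb1, hb2⟩, hbuniq⟩ := hpS x₁ x₂ hx12
    have hbW : b ⊆ pWinv f B :=
      hWB x₁ (hZW ⟨y₁, hy₁, hfx₁⟩) x₂ (hZW ⟨y₂, hy₂, hfx₂⟩) hx12 b hbLS hb1 hb2
    -- b ⊆ Z
    have hbZ : b ⊆ Z := by
      intro z hz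
      cases hfz : f z with
      | none =>
        exfalso
        have hzD : z ∈ (pDom f)ᶜ ∪ {x | f x = some y₁} := Or.inl (by simp [pDom, hfz])
        have hx1m : x₁ ∈ (pDom f)ᶜ ∪ {x | f x = some y₁} := Or.inr hfx₁
        have hzx1 : z ≠ x₁ := by rintro rfl; rw [hfz] at hfx₁; exact Option.some_ne_none _ hfx₁.symm
        have hbsub := hfib y₁ z hzD x₁ hx1m hzx1 b hbLS hz hb1
        rcases hbsub hb2 with h | h
        · exact h (by simp [pDom, hfx₂])
        · simp only [Set.mem_setOf_eq] at h; rw [hfx₂, Option.some_inj] at h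
          exact hyy h.symm
      | some w => exact ⟨w, hbW hz w hfz, hfz⟩
    -- b meets each group at most once
    have hbmeet : ∀ g ∈ G, (b ∩ g).ncard ≤ 1 := by
      rintro g ⟨y, hy, -, rfl⟩
      rw [Set.ncard_le_one_iff]
      rintro u v ⟨hub, hug⟩ ⟨hvb, hvg⟩
      by_contra huv
      simp only [Set.mem_setOf_eq] at hug hvg
      have hum : u ∈ (pDom f)ᶜ ∪ {x | f x = some y} := Or.inr hug
      have hvm : v ∈ (pDom f)ᶜ ∪ {x | f x = some y} := Or.inr hvg
      have hbsub := hfib y u hum v hvm huv b hbLS hub hvb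
      have h1 : y₁ = y := by
        rcases hbsub hb1 with h | h
        · exact absurd (by simp [pDom, hfx₁]) h
        · simp only [Set.mem_setOf_eq] at h; rw [hfx₁, Option.some_inj] at h; exact h
      have h2 : y₂ = y := by
        rcases hbsub hb2 with h | h
        · exact absurd (by simp [pDom, hfx₂]) h
        · simp only [Set.mem_setOf_eq] at h; rw [hfx₂, Option.some_inj] at h; exact h
      exact hyy (h1.trans h2.symm)
    constructor
    · refine ⟨b, ⟨⟨hbLS, hbZ, hbmeet⟩, hb1, hb2⟩, ?_⟩
      rintro b' ⟨⟨hb'LS, -, -⟩, hb'1, hb'2⟩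
      exact hbuniq b' ⟨hb'LS, hb'1, hb'2⟩
    · rintro ⟨g, ⟨y, -, -, rfl⟩, hg1, hg2⟩
      simp only [Set.mem_setOf_eq] at hg1 hg2
      rw [hg1, Option.some_inj] at hfx₁
      rw [hg2, Option.some_inj] at hfx₂
      exact hyy (hfx₁.symm.trans hfx₂)
end

section
/- Let l ≥ 3, d ≥ 1, and M(l,d) the PBD on V = {1,...,l+d} with blocks L = {1,...,l} and all 2-element subsets {i,j} with l+1 ≤ j ≤ l+d and i < j. Let f : V → V be a partial function. If L ⊄ Dom(f), then f belongs to the Wilson monoid W(l,d) if and only if Dom(f) is open and |f(L ∩ Dom(f))| ≤ 1. If L ⊆ Dom(f), then f ∈ W(l,d) if and only if |f(L)| = 1 or f restricted to L is a permutation of L. -/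
/-- The blocks of the PBD `M(l,d)`: the set `L` of size `l`, together with all
two-element sets having at least one point outside `L` (these are exactly the
pairs `{i, j}` with `l + 1 ≤ j ≤ l + d`, `i < j`). -/
def MldBlocks {V : Type*} (L : Set V) : Set (Set V) :=
  {L} ∪ {B | ∃ x y : V, x ≠ y ∧ (x ∉ L ∨ y ∉ L) ∧ B = {x, y}}

/-- The open sets of `M(l,d)`: subsets of `D = Lᶜ`, and sets containing at
least `l - 1` points of `L`. -/
def OpenMld {V : Type*} (L : Set V) (l : ℕ) (X : Set V) : Prop :=
  X ⊆ Lᶜ ∨ l - 1 ≤ (L ∩ X).ncard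

/-- The restriction of the partial function `f` to `L` is a permutation of `L`. -/
def PermOnL {V : Type*} (L : Set V) (f : V → Option V) : Prop :=
  (∀ x ∈ L, ∃ y ∈ L, f x = some y) ∧
  (∀ x ∈ L, ∀ y ∈ L, f x = f y → x = y) ∧
  (∀ y ∈ L, ∃ x ∈ L, f x = some y)

/-- Membership in the Wilson monoid `W(l,d)`: open domain, and for every block
either the image has at most one point, or the block is mapped injectively
into a block. -/
def MemW {V : Type*} (L : Set V) (l : ℕ) (f : V → Option V) : Prop :=
  OpenMld L l (pDom f) ∧
    ∀ B ∈ MldBlocks L,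
      (imOn f B).ncard ≤ 1 ∨
      (B ⊆ pDom f ∧ (∀ x ∈ B, ∀ y ∈ B, f x = f y → x = y) ∧
        ∃ B' ∈ MldBlocks L, imOn f B ⊆ B')

section Aux
variable {V : Type*} [Fintype V]

lemma wilson_pair_cond (L : Set V) (f : V → Option V) {x y : V}
    (hxy : x ≠ y) (hout : x ∉ L ∨ y ∉ L) :
    (imOn f ({x, y} : Set V)).ncard ≤ 1 ∨
      (({x, y} : Set V) ⊆ pDom f ∧
        (∀ a ∈ ({x, y} : Set V), ∀ b ∈ ({x, y} : Set V), f a = f b → a = b) ∧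
        ∃ B' ∈ MldBlocks L, imOn f ({x, y} : Set V) ⊆ B') := by
  by_cases hne : ∃ a b : V, f x = some a ∧ f y = some b ∧ a ≠ b
  · obtain ⟨a, b, ha, hb, hab⟩ := hne
    right
    have him : imOn f ({x, y} : Set V) ⊆ {a, b} := by
      rintro c ⟨u, hu, hc⟩
      rcases hu with rfl | rfl
      · rw [ha] at hc; left; exact (Option.some_injective _ hc).symm
      · rw [hb] at hc; right; exact (Option.some_injective _ hc).symm
    refine ⟨?_, ?_, ?_⟩
    · intro u hu
      rcases hu with rfl | rfl <;> simp [pDom, ha, hb]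
    · intro u hu v hv huv
      rcases hu with rfl | rfl <;> rcases hv with rfl | rfl <;>
        first | rfl | (exfalso; rw [ha, hb] at huv; simp_all)
    · by_cases haL : a ∈ L
      · by_cases hbL : b ∈ L
        · exact ⟨L, Or.inl rfl, him.trans (by rintro c (rfl | rfl) <;> assumption)⟩
        · exact ⟨{a, b}, Or.inr ⟨a, b, hab, Or.inr hbL, rfl⟩, him⟩
      · exact ⟨{a, b}, Or.inr ⟨a, b, hab, Or.inl haL, rfl⟩, him⟩
  · left
    push_neg at hne
    rw [Set.ncard_le_one (Set.toFinite _)]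
    rintro c ⟨u, hu, hc⟩ c' ⟨u', hu', hc'⟩
    rcases hu with rfl | rfl <;> rcases hu' with rfl | rfl
    · rw [hc] at hc'; exact Option.some_injective _ hc'
    · exact hne c c' hc hc'
    · exact (hne c' c hc' hc).symm
    · rw [hc] at hc'; exact Option.some_injective _ hc'

/-- `MemW` reduces to the condition for the single block `L`. -/
lemma memW_iff (L : Set V) (l : ℕ) (f : V → Option V) :
    MemW L l f ↔ OpenMld L l (pDom f) ∧
      ((imOn f L).ncard ≤ 1 ∨
        (L ⊆ pDom f ∧ (∀ x ∈ L, ∀ y ∈ L, f x = f y → x = y) ∧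
          ∃ B' ∈ MldBlocks L, imOn f L ⊆ B')) := by
  constructor
  · rintro ⟨h1, h2⟩
    exact ⟨h1, h2 L (Or.inl rfl)⟩
  · rintro ⟨h1, h2⟩
    refine ⟨h1, ?_⟩
    rintro B (rfl | ⟨x, y, hxy, hout, rfl⟩)
    · exact h2
    · exact wilson_pair_cond L f hxy hout
end Aux

theorem stmt15 {V : Type*} [Fintype V] (l d : ℕ) (hl : 3 ≤ l) (hd : 1 ≤ d)
    (hcard : Fintype.card V = l + d) (L : Set V) (hL : L.ncard = l)
    (f : V → Option V) :
    (¬L ⊆ pDom f →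
      (MemW L l f ↔ (OpenMld L l (pDom f) ∧ (imOn f L).ncard ≤ 1))) ∧
    (L ⊆ pDom f →
      (MemW L l f ↔ ((imOn f L).ncard = 1 ∨ PermOnL L f))) := by
  
  have hLfin : L.Finite := Set.toFinite L
  constructor
  · intro hns
    rw [memW_iff]
    constructor
    · rintro ⟨h1, h2 | ⟨hsub, _, _⟩⟩
      · exact ⟨h1, h2⟩
      · exact absurd hsub hns
    · rintro ⟨h1, h2⟩; exact ⟨h1, Or.inl h2⟩
  · intro hsub
    have hopen : OpenMld L l (pDom f) := by
      right
      rw [Set.inter_eq_self_of_subset_left hsub, hL]; omega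
    set g : V → V := fun x => (f x).getD x with hg
    have hfg : ∀ x ∈ L, f x = some (g x) := by
      intro x hx
      have hd := hsub hx
      cases h : f x with
      | none => exact absurd h hd
      | some a => simp [hg, h]
    have himg : imOn f L = g '' L := by
      ext c; constructor
      · rintro ⟨u, hu, hc⟩
        exact ⟨u, hu, Option.some_injective _ ((hfg u hu).symm.trans hc)⟩
      · rintro ⟨u, hu, rfl⟩
        exact ⟨u, hu, hfg u hu⟩
    have hLne : L.Nonempty := by
      rw [Set.nonempty_iff_ne_empty]; intro h
      rw [h, Set.ncard_empty] at hL; omega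
    rw [memW_iff]
    constructor
    · rintro ⟨h1, h2 | ⟨_, hinj, B', hB', him⟩⟩
      · left
        have hne : (imOn f L).Nonempty := by
          obtain ⟨x, hx⟩ := hLne
          exact ⟨g x, x, hx, hfg x hx⟩
        have hpos : 0 < (imOn f L).ncard :=
          (Set.ncard_pos (Set.toFinite _)).mpr hne
        omega
      · have hinj' : Set.InjOn g L := fun a ha b hb hab =>
          hinj a ha b hb (by rw [hfg a ha, hfg b hb, hab])
        have hcard : (imOn f L).ncard = l := by
          rw [himg, Set.ncard_image_of_injOn hinj', hL]
        rcases hB' with hBL | ⟨x, y, hxy, hout, rfl⟩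
        · rw [Set.mem_singleton_iff] at hBL
          rw [hBL] at him
          have heq : imOn f L = L :=
            Set.eq_of_subset_of_ncard_le him (by rw [hcard, hL]) hLfin
          right
          refine ⟨?_, hinj, ?_⟩
          · intro x hx
            have hgx : g x ∈ imOn f L := ⟨x, hx, hfg x hx⟩
            exact ⟨g x, heq ▸ hgx, hfg x hx⟩
          · intro y hy
            have : y ∈ imOn f L := heq.symm ▸ hy
            obtain ⟨x, hx, hfx⟩ := this
            exact ⟨x, hx, hfx⟩
        · exfalso
          have hle : (imOn f L).ncard ≤ ({x, y} : Set V).ncard :=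
            Set.ncard_le_ncard him (Set.toFinite _)
          have h2 : ({x, y} : Set V).ncard ≤ 2 :=
            (Set.ncard_insert_le _ _).trans (by rw [Set.ncard_singleton])
          omega
    · rintro (h1 | hperm)
      · exact ⟨hopen, Or.inl h1.le⟩
      · refine ⟨hopen, Or.inr ⟨hsub, hperm.2.1, L, Or.inl rfl, ?_⟩⟩
        rintro c ⟨u, hu, hc⟩
        obtain ⟨y, hy, hfy⟩ := hperm.1 u hu
        rw [hfy] at hc
        exact (Option.some_injective _ hc) ▸ hy
end
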